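/- For every n ≥ 1 and every λ_1 with 1 ≤ λ_1 ≤ n, the hook partition (λ_1, 1^{n−λ_1}) satisfies η_{(λ_1,1^{n−λ_1})} = (−1)^n·(1 + (−1)^{λ_1}·n·D_{λ_1−1}) = (−1)^{n−λ_1}·(D_{λ_1} + (n−λ_1)·D_{λ_1−1}). In particular, η_{(n−1,1)} = −(D_{n−1} + D_{n−2}) for n ≥ 2. -/

import Mathlib

/-- Derangement numbers: `D 0 = 1`, `D (m+1) = (m+1) * D m + (-1)^(m+1)`. -/
def derange : ℕ → ℤ
  | 0 => 1
  | n + 1 => (n + 1 : ℤ) * derange n + (-1) ^ (n + 1)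

/-- Subtract one from every part and discard the parts that become zero
(deleting the first column of the Ferrers diagram). -/
def strip (l : List ℕ) : List ℕ := (l.map (· - 1)).filter (fun x => 0 < x)

lemma strip_measure (l : List ℕ) : (strip l).sum + (strip l).length ≤ l.sum := by
  induction l with
  | nil => simp [strip]
  | cons x t ih =>
      simp only [strip, List.map_cons, List.filter_cons] at ih ⊢
      by_cases hx : 0 < x - 1 <;> simp [hx] <;> omega

/-- The eigenvalues of the derangement graph, defined by Renteln's recurrence:
`η ∅ = 1` and `η λ = (-1)^h (η (λ-ĥ) + (-1)^{λ₁} h η (λ-ĉ))`, where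
`h = λ₁ + r - 1` is the hook size, `λ-ĥ = strip (tail λ)` removes the hook,
and `λ-ĉ = strip λ` removes the first column. -/
def eta : List ℕ → ℤ
  | [] => 1
  | a :: t =>
      (-1) ^ (a + t.length) *
        (eta (strip t) + (-1) ^ a * ((a : ℤ) + t.length) * eta (strip (a :: t)))
  termination_by l => l.sum + l.length
  decreasing_by
  · have h1 := strip_measure t
    simp only [List.sum_cons, List.length_cons]
    omega
  · have h1 := strip_measure (a :: t)
    simp only [List.sum_cons, List.length_cons] at h1 ⊢
    omega

/-- `l` is (the list of parts of) a partition of `n`: weakly decreasing,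
all parts positive, summing to `n`. -/
def IsPartition (n : ℕ) (l : List ℕ) : Prop :=
  l.Pairwise (· ≥ ·) ∧ (∀ x ∈ l, 0 < x) ∧ l.sum = n

/-- The hook partition `(a, 1^(n-a))` of `n`. -/
def hookP (n a : ℕ) : List ℕ := a :: List.replicate (n - a) 1

lemma strip_rep (k : ℕ) : strip (List.replicate k 1) = [] := by
  induction k with
  | zero => simp [strip]
  | succ n ih => simpa [strip, List.replicate_succ, List.filter_cons] using ih
lemma strip_cons (a : ℕ) (l : List ℕ) (ha : 2 ≤ a) :
    strip (a :: l) = (a - 1) :: strip l := by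
  simp [strip, List.filter_cons]; omega
lemma strip_cons_one (l : List ℕ) : strip (1 :: l) = strip l := by
  simp [strip, List.filter_cons]
lemma strip_nil : strip [] = [] := rfl
lemma eta_nil : eta [] = 1 := by rw [eta]
lemma eta_cons (a : ℕ) (t : List ℕ) : eta (a :: t) =
    (-1) ^ (a + t.length) *
      (eta (strip t) + (-1) ^ a * ((a : ℤ) + t.length) * eta (strip (a :: t))) := by
  rw [eta]
lemma eta_row (m : ℕ) : eta [m] = derange m := by
  induction m with
  | zero =>
      have : strip [0] = [] := by simp [strip]
      rw [eta_cons]; simp [this, strip_nil, eta_nil, derange]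
  | succ k ih =>
      rw [eta_cons]
      rcases Nat.eq_zero_or_pos k with hk | hk
      · subst hk
        have : strip [1] = [] := by simp [strip]
        simp [this, strip_nil, eta_nil, derange]
      · have h2 : 2 ≤ k + 1 := by omega
        rw [strip_cons _ _ h2]
        simp only [Nat.add_sub_cancel, strip, List.map_nil, List.filter_nil, eta_nil, List.length_nil]
        rw [ih, derange]
        simp only [Nat.add_zero, List.length_nil]
        have he : ((-1:ℤ)) ^ (k+1) * (-1) ^ (k+1) = 1 := by
          rw [← pow_add]; exact Even.neg_one_pow ⟨k+1, rfl⟩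
        push_cast
        linear_combination ((k:ℤ)+1) * derange k * he
lemma eta_strip_hook (n a : ℕ) (ha : 1 ≤ a) :
    eta (strip (a :: List.replicate (n - a) 1)) = derange (a - 1) := by
  rcases Nat.lt_or_ge a 2 with h2 | h2
  · have : a = 1 := by omega
    subst this
    rw [strip_cons_one, strip_rep, eta_nil]; rfl
  · rw [strip_cons _ _ h2, strip_rep, eta_row]

lemma eta_hook1 (n a : ℕ) (ha : 1 ≤ a) (han : a ≤ n) :
    eta (hookP n a) = (-1) ^ n * (1 + (-1) ^ a * (n : ℤ) * derange (a - 1)) := by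
  rw [hookP, eta_cons, strip_rep, eta_nil, eta_strip_hook n a ha,
    List.length_replicate]
  have hh : a + (n - a) = n := by omega
  rw [hh, Nat.cast_sub han]
  push_cast
  ring

lemma derange_eq (a : ℕ) (ha : 1 ≤ a) :
    derange a = (a : ℤ) * derange (a - 1) + (-1) ^ a := by
  obtain ⟨b, rfl⟩ := Nat.exists_eq_add_of_le' ha
  simp only [Nat.add_sub_cancel]
  rw [show derange (b + 1) = (b + 1 : ℤ) * derange b + (-1) ^ (b + 1) from rfl]
  push_cast
  ring

lemma eta_hook2 (n a : ℕ) (ha : 1 ≤ a) (han : a ≤ n) :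
    eta (hookP n a) =
      (-1) ^ (n - a) * (derange a + ((n - a : ℕ) : ℤ) * derange (a - 1)) := by
  rw [eta_hook1 n a ha han, derange_eq a ha, Nat.cast_sub han]
  have h1 : ((-1:ℤ)) ^ (n - a) * (-1) ^ a = (-1) ^ n := by
    rw [← pow_add]; congr 1; omega
  have hq : ((-1:ℤ)) ^ a * (-1) ^ a = 1 := by
    rw [← pow_add]; exact Even.neg_one_pow ⟨a, rfl⟩
  rw [← h1]
  linear_combination ((-1:ℤ) ^ (n - a) * n * derange (a - 1)) * hq


/-- Hook eigenvalues: for `1 ≤ a ≤ n`,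
`η_{(a,1^{n-a})} = (-1)^n (1 + (-1)^a n D_{a-1}) = (-1)^{n-a}(D_a + (n-a) D_{a-1})`;
in particular `η_{(n-1,1)} = -(D_{n-1} + D_{n-2})` for `n ≥ 2`. -/
theorem eta_hook_formula (n a : ℕ) (hn : 1 ≤ n) (ha : 1 ≤ a) (han : a ≤ n) :
    eta (hookP n a) = (-1) ^ n * (1 + (-1) ^ a * (n : ℤ) * derange (a - 1)) ∧
    eta (hookP n a) =
      (-1) ^ (n - a) * (derange a + ((n - a : ℕ) : ℤ) * derange (a - 1)) ∧
    (2 ≤ n → eta (hookP n (n - 1)) = -(derange (n - 1) + derange (n - 2))) := by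
  refine ⟨eta_hook1 n a ha han, eta_hook2 n a ha han, fun h2 => ?_⟩
  have h1 : 1 ≤ n - 1 := by omega
  have h2' : n - 1 ≤ n := by omega
  rw [eta_hook2 n (n - 1) h1 h2']
  have e1 : n - (n - 1) = 1 := by omega
  have e2 : n - 1 - 1 = n - 2 := by omega
  rw [e1, e2]
  push_cast
  ring
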